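/- For pairwise distinct nonzero elements A, B, C of a skew field K, the three-point ratio of inverses satisfies r(A⁻¹, B⁻¹; C⁻¹) = B · r(A,B;C) · A⁻¹, i.e., (B⁻¹-C⁻¹)⁻¹(A⁻¹-C⁻¹) = B(B-C)⁻¹(A-C)A⁻¹. -/
import Mathlib

theorem ratio_of_inverses {K : Type*} [DivisionRing K] (A B C : K)
    (hA : A ≠ 0) (hB : B ≠ 0) (hC : C ≠ 0)
    (hAB : A ≠ B) (hAC : A ≠ C) (hBC : B ≠ C) :
    (B⁻¹ - C⁻¹)⁻¹ * (A⁻¹ - C⁻¹) = B * ((B - C)⁻¹ * (A - C)) * A⁻¹ := by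
  have key : ∀ x y : K, x ≠ 0 → y ≠ 0 → x⁻¹ - y⁻¹ = y⁻¹ * (y - x) * x⁻¹ := by
    intro x y hx hy
    rw [mul_sub, inv_mul_cancel₀ hy, sub_mul, one_mul, mul_assoc,
      mul_inv_cancel₀ hx, mul_one]
  have hCB : C - B ≠ 0 := sub_ne_zero.mpr (Ne.symm hBC)
  rw [key A C hA hC, key B C hB hC, mul_inv_rev, mul_inv_rev, inv_inv]
  rw [inv_inv, show B * ((C - B)⁻¹ * C) * (C⁻¹ * (C - A) * A⁻¹)
      = B * ((C - B)⁻¹ * (C * C⁻¹) * (C - A)) * A⁻¹ by noncomm_ring,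
    mul_inv_cancel₀ hC, mul_one]
  congr 2
  rw [(neg_sub B C).symm, (neg_sub A C).symm,
    inv_neg, neg_mul_neg]
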